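/- Suppose the monotone-density assumption holds, the loss ℓ is (C,α)-Hölder, and the trigger η satisfies ‖η‖₂² ≥ 4 ηᵀ(m₁−m₀) (equivalently ‖η‖₂ ≥ 4 cos(η, m₁−m₀)‖m₁−m₀‖₂). Then for every measurable f : ℝ^p → [0,1], the clean risk satisfies ℓ^cl(f) ≤ (1−ρ)^{-1} ℓ^poi(f) + C (1−ρ)^{−α} ( max_{i=0,1} h_i^η(‖η‖₂/4) )^α. -/

import Mathlib

open MeasureTheory Real
open scoped RealInnerProductSpace

noncomputable section

/-- The clean input density `μ^cl_X(x) = λ ν₁(x) + (1-λ) ν₀(x)`. -/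
def muCl {p : ℕ} (lam : ℝ) (ν : Fin 2 → EuclideanSpace ℝ (Fin p) → ℝ)
    (x : EuclideanSpace ℝ (Fin p)) : ℝ :=
  lam * ν 1 x + (1 - lam) * ν 0 x

/-- The backdoor input density `μ^bd_X(x) = λ ν₁(x-η) + (1-λ) ν₀(x-η)`. -/
def muBd {p : ℕ} (lam : ℝ) (ν : Fin 2 → EuclideanSpace ℝ (Fin p) → ℝ)
    (η x : EuclideanSpace ℝ (Fin p)) : ℝ :=
  lam * ν 1 (x - η) + (1 - lam) * ν 0 (x - η)

/-- The poisoned input density `μ^poi_X = (1-ρ) μ^cl_X + ρ μ^bd_X`. -/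
def muPoi {p : ℕ} (lam ρ : ℝ) (ν : Fin 2 → EuclideanSpace ℝ (Fin p) → ℝ)
    (η x : EuclideanSpace ℝ (Fin p)) : ℝ :=
  (1 - ρ) * muCl lam ν x + ρ * muBd lam ν η x

/-- The clean regression function `f^cl_*(x) = λ ν₁(x) / μ^cl_X(x)`. -/
def fCl {p : ℕ} (lam : ℝ) (ν : Fin 2 → EuclideanSpace ℝ (Fin p) → ℝ)
    (x : EuclideanSpace ℝ (Fin p)) : ℝ :=
  lam * ν 1 x / muCl lam ν x

/-- The poisoned regression function `f^poi_*(x) = (1-ρ) λ ν₁(x) / μ^poi_X(x)`. -/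
def fPoi {p : ℕ} (lam ρ : ℝ) (ν : Fin 2 → EuclideanSpace ℝ (Fin p) → ℝ)
    (η x : EuclideanSpace ℝ (Fin p)) : ℝ :=
  (1 - ρ) * lam * ν 1 x / muPoi lam ρ ν η x

/-- The tail function `h_i^η(r) = ∫_{x : |(x-m)ᵀη| ≥ r ‖η‖₂} ν(x) dx`. -/
def tailProb {p : ℕ} (ν : EuclideanSpace ℝ (Fin p) → ℝ) (m η : EuclideanSpace ℝ (Fin p))
    (r : ℝ) : ℝ :=
  ∫ x in {x : EuclideanSpace ℝ (Fin p) | r * ‖η‖ ≤ |⟪x - m, η⟫|}, ν x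

/-- A Lebesgue probability density on `ℝ^p`. -/
def IsProbDensity {p : ℕ} (ν : EuclideanSpace ℝ (Fin p) → ℝ) : Prop :=
  Measurable ν ∧ (∀ x, 0 ≤ ν x) ∧ Integrable ν ∧ (∫ x, ν x) = 1

/-- `m` is the mean of the probability density `ν`. -/
def HasCondMean {p : ℕ} (ν : EuclideanSpace ℝ (Fin p) → ℝ)
    (m : EuclideanSpace ℝ (Fin p)) : Prop :=
  (∫ x, ν x • x) = m

/-- Monotone-density assumption: the density decreases along any ray from its mean. -/
def MonotoneDensity {p : ℕ} (ν : EuclideanSpace ℝ (Fin p) → ℝ)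
    (m : EuclideanSpace ℝ (Fin p)) : Prop :=
  ∀ (η : EuclideanSpace ℝ (Fin p)) (c1 c2 : ℝ), 0 < c1 → c1 < c2 →
    ν (m - c2 • η) ≤ ν (m - c1 • η)

/-- The loss `ℓ` is `(C,α)`-Hölder on `[0,1]²`. -/
def IsHolderLoss (ℓ : ℝ → ℝ → ℝ) (C α : ℝ) : Prop :=
  ∀ x ∈ Set.Icc (0:ℝ) 1, ∀ y ∈ Set.Icc (0:ℝ) 1, ∀ z ∈ Set.Icc (0:ℝ) 1,
    |ℓ x y - ℓ x z| ≤ C * |y - z| ^ α ∧ |ℓ x y - ℓ z y| ≤ C * |x - z| ^ α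

/-! ### Auxiliary lemmas -/

lemma bernoulli_le {s α : ℝ} (hs : 0 ≤ s) (hα0 : 0 ≤ α) (hα1 : α ≤ 1) :
    s ^ α ≤ 1 + α * (s - 1) := by
  have h := Real.geom_mean_le_arith_mean2_weighted (w₁ := α) (w₂ := 1 - α) (p₁ := s)
    (p₂ := 1) hα0 (by linarith) hs zero_le_one (by ring)
  rw [Real.one_rpow, mul_one] at h
  linarith

lemma tangent_rpow {t a α : ℝ} (ht : 0 ≤ t) (ha : 0 < a) (hα0 : 0 < α) (hα1 : α ≤ 1) :
    t ^ α ≤ a ^ α + α * a ^ (α - 1) * (t - a) := by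
  have h := bernoulli_le (div_nonneg ht ha.le) hα0.le hα1
  have hdiv : (t / a) ^ α = t ^ α / a ^ α := Real.div_rpow ht ha.le α
  rw [hdiv] at h
  have hapos : (0:ℝ) < a ^ α := Real.rpow_pos_of_pos ha α
  have hsub : a ^ (α - 1) = a ^ α / a := by
    rw [Real.rpow_sub ha, Real.rpow_one]
  rw [div_le_iff₀ hapos] at h
  have heq : (1 + α * (t / a - 1)) * a ^ α = a ^ α + α * (a ^ α / a) * (t - a) := by
    field_simp
  rw [hsub]
  linarith

lemma jensen_rpow_aux {X : Type*} [MeasurableSpace X] {μ : Measure X}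
    {g w : X → ℝ} (hg : Measurable g) (hw : Measurable w)
    (hg0 : ∀ x, 0 ≤ g x) (hg1 : ∀ x, g x ≤ 1) (hw0 : ∀ x, 0 ≤ w x)
    (hwint : Integrable w μ) (hw1 : (∫ x, w x ∂μ) = 1) {α : ℝ} (hα0 : 0 < α) (hα1 : α ≤ 1) :
    (∫ x, g x ^ α * w x ∂μ) ≤ (∫ x, g x * w x ∂μ) ^ α := by
  have hbound : ∀ (h : X → ℝ), (∀ x, 0 ≤ h x) → (∀ x, h x ≤ 1) → Measurable h →
      Integrable (fun x => h x * w x) μ := by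
    intro h h0 h1 hm
    refine hwint.mono' (hm.mul hw).aestronglyMeasurable (ae_of_all _ fun x => ?_)
    rw [Real.norm_eq_abs, abs_of_nonneg (mul_nonneg (h0 x) (hw0 x))]
    nlinarith [hw0 x, h0 x, h1 x]
  have int_gw : Integrable (fun x => g x * w x) μ := hbound g hg0 hg1 hg
  have hgα_meas : Measurable fun x => g x ^ α :=
    (Real.continuous_rpow_const hα0.le).measurable.comp hg
  have int_gaw : Integrable (fun x => g x ^ α * w x) μ :=
    hbound _ (fun x => Real.rpow_nonneg (hg0 x) α)
      (fun x => Real.rpow_le_one (hg0 x) (hg1 x) hα0.le) hgα_meas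
  set a := ∫ x, g x * w x ∂μ with ha_def
  have ha0 : 0 ≤ a := integral_nonneg fun x => mul_nonneg (hg0 x) (hw0 x)
  rcases ha0.eq_or_lt with ha | ha
  · have hz : (fun x => g x * w x) =ᵐ[μ] 0 :=
      (integral_eq_zero_iff_of_nonneg (fun x => mul_nonneg (hg0 x) (hw0 x)) int_gw).mp ha.symm
    have hz2 : (fun x => g x ^ α * w x) =ᵐ[μ] 0 := by
      filter_upwards [hz] with x hx
      rcases mul_eq_zero.mp hx with h | h
      · simp [h, Real.zero_rpow hα0.ne']
      · simp [h]
    rw [integral_congr_ae hz2]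
    simp [← ha, Real.zero_rpow hα0.ne']
  · have hpt : ∀ x, g x ^ α * w x ≤ (a ^ α - α * a ^ (α - 1) * a) * w x
        + (α * a ^ (α - 1)) * (g x * w x) := by
      intro x
      have h := mul_le_mul_of_nonneg_right (tangent_rpow (hg0 x) ha hα0 hα1) (hw0 x)
      nlinarith [h]
    have int_rhs : Integrable (fun x => (a ^ α - α * a ^ (α - 1) * a) * w x
        + (α * a ^ (α - 1)) * (g x * w x)) μ :=
      (hwint.const_mul _).add (int_gw.const_mul _)
    calc (∫ x, g x ^ α * w x ∂μ) ≤ ∫ x, ((a ^ α - α * a ^ (α - 1) * a) * w x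
          + (α * a ^ (α - 1)) * (g x * w x)) ∂μ := integral_mono int_gaw int_rhs hpt
      _ = (a ^ α - α * a ^ (α - 1) * a) * (∫ x, w x ∂μ)
          + (α * a ^ (α - 1)) * (∫ x, g x * w x ∂μ) := by
          rw [integral_add (hwint.const_mul _) (int_gw.const_mul _),
            integral_const_mul, integral_const_mul]
      _ = a ^ α := by
          rw [hw1, ← ha_def]
          have : a ^ (α - 1) * a = a ^ α := by
            rw [Real.rpow_sub ha, Real.rpow_one, div_mul_cancel₀ _ ha.ne']
          nlinarith [this]

lemma setIntegral_translate {p : ℕ} (ν : EuclideanSpace ℝ (Fin p) → ℝ)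
    (η : EuclideanSpace ℝ (Fin p)) {B : Set (EuclideanSpace ℝ (Fin p))}
    (hB : MeasurableSet B) :
    (∫ x in B, ν (x - η)) = ∫ x in {y | y + η ∈ B}, ν x := by
  have hT : MeasurableSet {y : EuclideanSpace ℝ (Fin p) | y + η ∈ B} :=
    hB.preimage (measurable_add_const η)
  rw [← integral_indicator hB, ← integral_indicator hT]
  have key : (fun x => B.indicator (fun z => ν (z - η)) x)
      = fun x => ({y | y + η ∈ B}.indicator ν) (x - η) := by
    funext x
    by_cases hx : x ∈ B
    · rw [Set.indicator_of_mem hx, Set.indicator_of_mem]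
      show x - η + η ∈ B
      simpa using hx
    · rw [Set.indicator_of_notMem hx, Set.indicator_of_notMem]
      show ¬ (x - η + η ∈ B)
      simpa using hx
  rw [key]
  exact integral_sub_right_eq_self _ η

lemma holder_continuousOn {ℓ : ℝ → ℝ → ℝ} {C α : ℝ} (hα0 : 0 < α)
    (hℓ : IsHolderLoss ℓ C α) :
    ContinuousOn (fun q : ℝ × ℝ => ℓ q.1 q.2) (Set.Icc (0:ℝ) 1 ×ˢ Set.Icc (0:ℝ) 1) := by
  set K : Set (ℝ × ℝ) := Set.Icc (0:ℝ) 1 ×ˢ Set.Icc (0:ℝ) 1 with hK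
  intro q hq
  have hbound : ∀ r ∈ K, |ℓ r.1 r.2 - ℓ q.1 q.2| ≤ C * |r.1 - q.1| ^ α + C * |r.2 - q.2| ^ α := by
    intro r hr
    have h1 := (hℓ r.1 hr.1 r.2 hr.2 q.2 hq.2).1
    have h2 := (hℓ r.1 hr.1 q.2 hq.2 q.1 hq.1).2
    have h3 := abs_sub_le (ℓ r.1 r.2) (ℓ r.1 q.2) (ℓ q.1 q.2)
    linarith
  have hcontb : Continuous fun r : ℝ × ℝ => C * |r.1 - q.1| ^ α + C * |r.2 - q.2| ^ α := by
    have hc1 : Continuous fun r : ℝ × ℝ => |r.1 - q.1| ^ α :=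
      (Real.continuous_rpow_const hα0.le).comp (continuous_fst.sub continuous_const).abs
    have hc2 : Continuous fun r : ℝ × ℝ => |r.2 - q.2| ^ α :=
      (Real.continuous_rpow_const hα0.le).comp (continuous_snd.sub continuous_const).abs
    exact ((continuous_const.mul hc1).add (continuous_const.mul hc2))
  have hb : Filter.Tendsto (fun r : ℝ × ℝ => C * |r.1 - q.1| ^ α + C * |r.2 - q.2| ^ α)
      (nhdsWithin q K) (nhds 0) := by
    have := (hcontb.continuousAt (x := q)).continuousWithinAt (s := K)
    simpa [ContinuousWithinAt, Real.zero_rpow hα0.ne'] using this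
  have : Filter.Tendsto (fun r : ℝ × ℝ => ℓ r.1 r.2) (nhdsWithin q K) (nhds (ℓ q.1 q.2)) := by
    rw [tendsto_iff_dist_tendsto_zero]
    apply squeeze_zero' (Filter.Eventually.of_forall fun r => dist_nonneg) ?_ hb
    filter_upwards [self_mem_nhdsWithin] with r hr
    rw [Real.dist_eq]
    exact hbound r hr
  exact this

lemma holder_measurable_comp {ℓ : ℝ → ℝ → ℝ} {C α : ℝ} (hα0 : 0 < α)
    (hℓ : IsHolderLoss ℓ C α) {X : Type*} [MeasurableSpace X] {f h : X → ℝ}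
    (hf : Measurable f) (hh : Measurable h) (hf01 : ∀ x, f x ∈ Set.Icc (0:ℝ) 1)
    (hh01 : ∀ x, h x ∈ Set.Icc (0:ℝ) 1) :
    Measurable fun x => ℓ (f x) (h x) := by
  set K : Set (ℝ × ℝ) := Set.Icc (0:ℝ) 1 ×ˢ Set.Icc (0:ℝ) 1 with hK
  have hcont : Continuous (K.restrict (fun q : ℝ × ℝ => ℓ q.1 q.2)) :=
    (holder_continuousOn hα0 hℓ).restrict
  have hmap : Measurable fun x => (⟨(f x, h x), ⟨hf01 x, hh01 x⟩⟩ : K) :=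
    (hf.prodMk hh).subtype_mk
  exact hcont.measurable.comp hmap

lemma holder_bounded {ℓ : ℝ → ℝ → ℝ} {C α : ℝ} (hC : 0 < C) (hα0 : 0 < α)
    (hℓ : IsHolderLoss ℓ C α) :
    ∀ a ∈ Set.Icc (0:ℝ) 1, ∀ b ∈ Set.Icc (0:ℝ) 1, ℓ a b ≤ ℓ 0 0 + 2 * C := by
  intro a ha b hb
  have h0 : (0:ℝ) ∈ Set.Icc (0:ℝ) 1 := ⟨le_rfl, zero_le_one⟩
  have h1 := (hℓ a ha b hb 0 h0).1
  have h2 := (hℓ a ha 0 h0 0 h0).2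
  have hb1 : |b - 0| ^ α ≤ 1 := by
    rw [sub_zero, abs_of_nonneg hb.1]
    exact Real.rpow_le_one hb.1 hb.2 hα0.le
  have ha1 : |a - 0| ^ α ≤ 1 := by
    rw [sub_zero, abs_of_nonneg ha.1]
    exact Real.rpow_le_one ha.1 ha.2 hα0.le
  have e1 := abs_le.mp h1
  have e2 := abs_le.mp h2
  nlinarith [e1.2, e2.2]

lemma real_key {ρ n a b : ℝ} (hρ0 : 0 ≤ ρ) (h1ρ : 0 < 1 - ρ) (hn : 0 ≤ n)
    (hb : 0 ≤ b) (ha : 0 < a) (hna : n ≤ a) :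
    |n / a - (1 - ρ) * n / ((1 - ρ) * a + ρ * b)| * a ≤ (1 - ρ)⁻¹ * n ∧
    |n / a - (1 - ρ) * n / ((1 - ρ) * a + ρ * b)| * a ≤ (1 - ρ)⁻¹ * b := by
  have hP : 0 < (1 - ρ) * a + ρ * b := by nlinarith [mul_pos h1ρ ha, mul_nonneg hρ0 hb]
  have hdiff : n / a - (1 - ρ) * n / ((1 - ρ) * a + ρ * b)
      = n * (ρ * b) / (a * ((1 - ρ) * a + ρ * b)) := by
    field_simp
    ring
  have habs : |n / a - (1 - ρ) * n / ((1 - ρ) * a + ρ * b)| * a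
      = n * (ρ * b) / ((1 - ρ) * a + ρ * b) := by
    rw [hdiff, abs_of_nonneg (div_nonneg (mul_nonneg hn (mul_nonneg hρ0 hb))
      (mul_pos ha hP).le)]
    field_simp
  rw [habs]
  constructor
  · have hbP : ρ * b ≤ (1 - ρ) * a + ρ * b := by nlinarith [mul_nonneg h1ρ.le ha.le]
    calc n * (ρ * b) / ((1 - ρ) * a + ρ * b) ≤ n := by
          rw [div_le_iff₀ hP]
          nlinarith [mul_le_mul_of_nonneg_left hbP hn]
      _ ≤ (1 - ρ)⁻¹ * n := by
          rw [inv_mul_eq_div, le_div_iff₀ h1ρ]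
          nlinarith [mul_nonneg hn hρ0]
  · rw [inv_mul_eq_div, div_le_div_iff₀ hP h1ρ]
    nlinarith [mul_nonneg (mul_nonneg h1ρ.le hb) (sub_nonneg.mpr hna),
      mul_nonneg (mul_nonneg (mul_nonneg h1ρ.le h1ρ.le) hb) hn,
      mul_nonneg (mul_nonneg hρ0 hb) hb]

/-- Theorem 1, clean-risk upper bound: under the monotone-density
assumption, a `(C,α)`-Hölder loss and `‖η‖₂² ≥ 4 ηᵀ(m₁-m₀)`, for every measurable
`f : ℝ^p → [0,1]`,
`ℓ^cl(f) ≤ (1-ρ)⁻¹ ℓ^poi(f) + C (1-ρ)^{-α} (max_{i} h_i^η(‖η‖₂/4))^α`. -/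
theorem clean_risk_upper_bound {p : ℕ} (hp : 1 ≤ p)
    (ν : Fin 2 → EuclideanSpace ℝ (Fin p) → ℝ) (m : Fin 2 → EuclideanSpace ℝ (Fin p))
    (lam ρ : ℝ) (hlam : lam ∈ Set.Ioo (0:ℝ) 1) (hρ : ρ ∈ Set.Ioo (0:ℝ) 1)
    (hν : ∀ i, IsProbDensity (ν i)) (hm : ∀ i, HasCondMean (ν i) (m i))
    (hmono : ∀ i, MonotoneDensity (ν i) (m i))
    (ℓ : ℝ → ℝ → ℝ) (C α : ℝ) (hC : 0 < C) (hα : α ∈ Set.Ioc (0:ℝ) 1)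
    (hℓ : IsHolderLoss ℓ C α)
    (hℓnn : ∀ x ∈ Set.Icc (0:ℝ) 1, ∀ y ∈ Set.Icc (0:ℝ) 1, 0 ≤ ℓ x y)
    (η : EuclideanSpace ℝ (Fin p)) (hη : 4 * ⟪η, m 1 - m 0⟫ ≤ ‖η‖ ^ 2)
    (f : EuclideanSpace ℝ (Fin p) → ℝ) (hfmeas : Measurable f)
    (hf01 : ∀ x, f x ∈ Set.Icc (0:ℝ) 1) :
    (∫ x, ℓ (f x) (fCl lam ν x) * muCl lam ν x) ≤
      (1 - ρ)⁻¹ * (∫ x, ℓ (f x) (fPoi lam ρ ν η x) * muPoi lam ρ ν η x)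
        + C * (1 - ρ) ^ (-α) *
          (max (tailProb (ν 0) (m 0) η (‖η‖ / 4))
               (tailProb (ν 1) (m 1) η (‖η‖ / 4))) ^ α := by
  obtain ⟨hlam0, hlam1⟩ := hlam
  obtain ⟨hρ0, hρ1⟩ := hρ
  obtain ⟨hα0, hα1⟩ := hα
  have h1ρ : (0:ℝ) < 1 - ρ := by linarith
  have hνm : ∀ i, Measurable (ν i) := fun i => (hν i).1
  have hνnn : ∀ i x, 0 ≤ ν i x := fun i => (hν i).2.1
  have hνint : ∀ i, Integrable (ν i) := fun i => (hν i).2.2.1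
  have hνone : ∀ i, (∫ x, ν i x) = 1 := fun i => (hν i).2.2.2
  -- density positivity / measurability / integrability
  have hw0 : ∀ x, 0 ≤ muCl lam ν x := fun x =>
    add_nonneg (mul_nonneg hlam0.le (hνnn 1 x)) (mul_nonneg (by linarith) (hνnn 0 x))
  have hwb0 : ∀ x, 0 ≤ muBd lam ν η x := fun x =>
    add_nonneg (mul_nonneg hlam0.le (hνnn 1 _)) (mul_nonneg (by linarith) (hνnn 0 _))
  have hwp0 : ∀ x, 0 ≤ muPoi lam ρ ν η x := fun x =>
    add_nonneg (mul_nonneg h1ρ.le (hw0 x)) (mul_nonneg hρ0.le (hwb0 x))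
  have hwm : Measurable (muCl lam ν) :=
    (measurable_const.mul (hνm 1)).add (measurable_const.mul (hνm 0))
  have hwbm : Measurable (muBd lam ν η) :=
    (measurable_const.mul ((hνm 1).comp (measurable_id.sub measurable_const))).add
      (measurable_const.mul ((hνm 0).comp (measurable_id.sub measurable_const)))
  have hwpm : Measurable (muPoi lam ρ ν η) :=
    (measurable_const.mul hwm).add (measurable_const.mul hwbm)
  have hwint : Integrable (muCl lam ν) :=
    ((hνint 1).const_mul lam).add ((hνint 0).const_mul (1 - lam))
  have hwbint : Integrable (muBd lam ν η) :=
    (((hνint 1).comp_sub_right η).const_mul lam).add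
      (((hνint 0).comp_sub_right η).const_mul (1 - lam))
  have hwpint : Integrable (muPoi lam ρ ν η) :=
    (hwint.const_mul (1 - ρ)).add (hwbint.const_mul ρ)
  have hw1 : (∫ x, muCl lam ν x) = 1 := by
    simp only [muCl]
    rw [integral_add ((hνint 1).const_mul lam) ((hνint 0).const_mul (1 - lam)),
      integral_const_mul, integral_const_mul, hνone 0, hνone 1]
    ring
  -- regression functions in [0,1]
  have hnum1 : ∀ x, lam * ν 1 x ≤ muCl lam ν x := by
    intro x
    simp only [muCl]
    linarith [mul_nonneg (show (0:ℝ) ≤ 1 - lam by linarith) (hνnn 0 x)]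
  have hnum2 : ∀ x, (1 - ρ) * lam * ν 1 x ≤ muPoi lam ρ ν η x := by
    intro x
    simp only [muPoi]
    nlinarith [mul_nonneg hρ0.le (hwb0 x), mul_le_mul_of_nonneg_left (hnum1 x) h1ρ.le,
      mul_nonneg h1ρ.le (hw0 x)]
  have hfcl01 : ∀ x, fCl lam ν x ∈ Set.Icc (0:ℝ) 1 := by
    intro x
    constructor
    · exact div_nonneg (mul_nonneg hlam0.le (hνnn 1 x)) (hw0 x)
    · rcases (hw0 x).eq_or_lt with h | h
      · show lam * ν 1 x / muCl lam ν x ≤ 1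
        rw [← h, div_zero]
        exact zero_le_one
      · exact div_le_one_of_le₀ (hnum1 x) (hw0 x)
  have hfpoi01 : ∀ x, fPoi lam ρ ν η x ∈ Set.Icc (0:ℝ) 1 := by
    intro x
    constructor
    · exact div_nonneg (mul_nonneg (mul_nonneg h1ρ.le hlam0.le) (hνnn 1 x)) (hwp0 x)
    · rcases (hwp0 x).eq_or_lt with h | h
      · show (1 - ρ) * lam * ν 1 x / muPoi lam ρ ν η x ≤ 1
        rw [← h, div_zero]
        exact zero_le_one
      · exact div_le_one_of_le₀ (hnum2 x) (hwp0 x)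
  have hfclm : Measurable (fCl lam ν) := (measurable_const.mul (hνm 1)).div hwm
  have hfpoim : Measurable (fPoi lam ρ ν η) := (measurable_const.mul (hνm 1)).div hwpm
  -- the deviation function g
  set g : EuclideanSpace ℝ (Fin p) → ℝ :=
    fun x => |fCl lam ν x - fPoi lam ρ ν η x| with hgdef
  have hgx : ∀ x, g x = |fCl lam ν x - fPoi lam ρ ν η x| := fun x => rfl
  have hgm : Measurable g := (hfclm.sub hfpoim).abs
  have hg0 : ∀ x, 0 ≤ g x := fun x => abs_nonneg _
  have hg1 : ∀ x, g x ≤ 1 := by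
    intro x
    have h1 := hfcl01 x
    have h2 := hfpoi01 x
    rw [hgx]
    exact abs_le.mpr ⟨by linarith [h1.1, h2.2], by linarith [h1.2, h2.1]⟩
  have hgαm : Measurable fun x => g x ^ α :=
    (Real.continuous_rpow_const hα0.le).measurable.comp hgm
  -- loss measurability and bounds
  have hL1 : Measurable fun x => ℓ (f x) (fCl lam ν x) :=
    holder_measurable_comp hα0 hℓ hfmeas hfclm hf01 hfcl01
  have hL2 : Measurable fun x => ℓ (f x) (fPoi lam ρ ν η x) :=
    holder_measurable_comp hα0 hℓ hfmeas hfpoim hf01 hfpoi01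
  have hMle := holder_bounded hC hα0 hℓ
  -- integrability
  have mkint : ∀ (L w : EuclideanSpace ℝ (Fin p) → ℝ), Measurable L → Measurable w →
      (∀ x, 0 ≤ L x) → (∀ x, L x ≤ ℓ 0 0 + 2 * C) → (∀ x, 0 ≤ w x) → Integrable w →
      Integrable fun x => L x * w x := by
    intro L w hLm hwm' hL0 hLb hw0' hwint'
    refine (hwint'.const_mul (ℓ 0 0 + 2 * C)).mono' ((hLm.mul hwm').aestronglyMeasurable)
      (ae_of_all _ fun x => ?_)
    rw [Real.norm_eq_abs, abs_of_nonneg (mul_nonneg (hL0 x) (hw0' x))]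
    exact mul_le_mul_of_nonneg_right (hLb x) (hw0' x)
  have I1 : Integrable fun x => ℓ (f x) (fCl lam ν x) * muCl lam ν x :=
    mkint _ _ hL1 hwm (fun x => hℓnn _ (hf01 x) _ (hfcl01 x))
      (fun x => hMle _ (hf01 x) _ (hfcl01 x)) hw0 hwint
  have I2 : Integrable fun x => ℓ (f x) (fPoi lam ρ ν η x) * muCl lam ν x :=
    mkint _ _ hL2 hwm (fun x => hℓnn _ (hf01 x) _ (hfpoi01 x))
      (fun x => hMle _ (hf01 x) _ (hfpoi01 x)) hw0 hwint
  have I3 : Integrable fun x => ℓ (f x) (fPoi lam ρ ν η x) * muPoi lam ρ ν η x :=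
    mkint _ _ hL2 hwpm (fun x => hℓnn _ (hf01 x) _ (hfpoi01 x))
      (fun x => hMle _ (hf01 x) _ (hfpoi01 x)) hwp0 hwpint
  have I4 : Integrable fun x => g x ^ α * muCl lam ν x := by
    refine hwint.mono' ((hgαm.mul hwm).aestronglyMeasurable) (ae_of_all _ fun x => ?_)
    have h1 : g x ^ α ≤ 1 := Real.rpow_le_one (hg0 x) (hg1 x) hα0.le
    have h2 : 0 ≤ g x ^ α := Real.rpow_nonneg (hg0 x) α
    rw [Real.norm_eq_abs, abs_of_nonneg (mul_nonneg h2 (hw0 x))]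
    linarith [mul_nonneg (sub_nonneg.mpr h1) (hw0 x)]
  have I5 : Integrable fun x => g x * muCl lam ν x := by
    refine hwint.mono' ((hgm.mul hwm).aestronglyMeasurable) (ae_of_all _ fun x => ?_)
    rw [Real.norm_eq_abs, abs_of_nonneg (mul_nonneg (hg0 x) (hw0 x))]
    linarith [mul_nonneg (sub_nonneg.mpr (hg1 x)) (hw0 x)]
  -- Step 1 : Hölder pointwise bound
  have hpt1 : ∀ x, ℓ (f x) (fCl lam ν x) * muCl lam ν x ≤
      ℓ (f x) (fPoi lam ρ ν η x) * muCl lam ν x + C * (g x ^ α * muCl lam ν x) := by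
    intro x
    have h := (hℓ (f x) (hf01 x) (fCl lam ν x) (hfcl01 x) (fPoi lam ρ ν η x) (hfpoi01 x)).1
    have h2 := (abs_le.mp h).2
    rw [← hgx x] at h2
    calc ℓ (f x) (fCl lam ν x) * muCl lam ν x
        ≤ (ℓ (f x) (fPoi lam ρ ν η x) + C * g x ^ α) * muCl lam ν x :=
          mul_le_mul_of_nonneg_right (by linarith) (hw0 x)
      _ = ℓ (f x) (fPoi lam ρ ν η x) * muCl lam ν x + C * (g x ^ α * muCl lam ν x) := by ring
  have step1 : (∫ x, ℓ (f x) (fCl lam ν x) * muCl lam ν x) ≤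
      (∫ x, ℓ (f x) (fPoi lam ρ ν η x) * muCl lam ν x) + C * ∫ x, g x ^ α * muCl lam ν x := by
    have h : (∫ x, ℓ (f x) (fCl lam ν x) * muCl lam ν x) ≤
        ∫ x, (ℓ (f x) (fPoi lam ρ ν η x) * muCl lam ν x + C * (g x ^ α * muCl lam ν x)) :=
      integral_mono I1 (I2.add (I4.const_mul C)) hpt1
    rwa [integral_add I2 (I4.const_mul C), integral_const_mul] at h
  -- Step 2 : change of measure
  have step2 : (∫ x, ℓ (f x) (fPoi lam ρ ν η x) * muCl lam ν x) ≤
      (1 - ρ)⁻¹ * ∫ x, ℓ (f x) (fPoi lam ρ ν η x) * muPoi lam ρ ν η x := by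
    have hpt : ∀ x, ℓ (f x) (fPoi lam ρ ν η x) * muCl lam ν x ≤
        (1 - ρ)⁻¹ * (ℓ (f x) (fPoi lam ρ ν η x) * muPoi lam ρ ν η x) := by
      intro x
      have hl0 : 0 ≤ ℓ (f x) (fPoi lam ρ ν η x) := hℓnn _ (hf01 x) _ (hfpoi01 x)
      have hwle : muCl lam ν x ≤ (1 - ρ)⁻¹ * muPoi lam ρ ν η x := by
        rw [inv_mul_eq_div, le_div_iff₀ h1ρ]
        simp only [muPoi]
        linarith [mul_nonneg hρ0.le (hwb0 x)]
      calc ℓ (f x) (fPoi lam ρ ν η x) * muCl lam ν x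
          ≤ ℓ (f x) (fPoi lam ρ ν η x) * ((1 - ρ)⁻¹ * muPoi lam ρ ν η x) :=
            mul_le_mul_of_nonneg_left hwle hl0
        _ = (1 - ρ)⁻¹ * (ℓ (f x) (fPoi lam ρ ν η x) * muPoi lam ρ ν η x) := by ring
    have h := integral_mono I2 (I3.const_mul _) hpt
    rwa [integral_const_mul] at h
  -- Step 3 : Jensen
  have step3 : (∫ x, g x ^ α * muCl lam ν x) ≤ (∫ x, g x * muCl lam ν x) ^ α :=
    jensen_rpow_aux hgm hwm hg0 hg1 hw0 hwint hw1 hα0 hα1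
  -- Step 4 : geometric bound on ∫ g μcl
  set Mx : ℝ := max (tailProb (ν 0) (m 0) η (‖η‖ / 4)) (tailProb (ν 1) (m 1) η (‖η‖ / 4))
    with hMxdef
  set A : Set (EuclideanSpace ℝ (Fin p)) := {x | ‖η‖ ^ 2 / 4 ≤ ⟪x - m 1, η⟫} with hAdef
  set T : Set (EuclideanSpace ℝ (Fin p)) := {y | y + η ∈ Aᶜ} with hTdef
  set S1 : Set (EuclideanSpace ℝ (Fin p)) := {x | ‖η‖ / 4 * ‖η‖ ≤ |⟪x - m 1, η⟫|} with hS1def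
  set S0 : Set (EuclideanSpace ℝ (Fin p)) := {x | ‖η‖ / 4 * ‖η‖ ≤ |⟪x - m 0, η⟫|} with hS0def
  have hinner_cont : ∀ z : EuclideanSpace ℝ (Fin p),
      Continuous fun x : EuclideanSpace ℝ (Fin p) => ⟪x - z, η⟫ := fun z =>
    (continuous_id.sub continuous_const).inner continuous_const
  have hAmeas : MeasurableSet A :=
    measurableSet_le measurable_const (hinner_cont (m 1)).measurable
  have hS1meas : MeasurableSet S1 :=
    measurableSet_le measurable_const (hinner_cont (m 1)).measurable.abs
  have hS0meas : MeasurableSet S0 :=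
    measurableSet_le measurable_const (hinner_cont (m 0)).measurable.abs
  have hTmeas : MeasurableSet T := hAmeas.compl.preimage (measurable_add_const η)
  have hrr : ‖η‖ / 4 * ‖η‖ = ‖η‖ ^ 2 / 4 := by rw [pow_two]; ring
  have hsqnn : (0:ℝ) ≤ ‖η‖ ^ 2 := sq_nonneg _
  have hexp : ∀ z y : EuclideanSpace ℝ (Fin p), ⟪y + η - z, η⟫ = ⟪y - z, η⟫ + ‖η‖ ^ 2 := by
    intro z y
    rw [show y + η - z = (y - z) + η by abel, inner_add_left, real_inner_self_eq_norm_sq]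
  have hmemT : ∀ y, y ∈ T → ⟪y - m 1, η⟫ < ‖η‖ ^ 2 / 4 - ‖η‖ ^ 2 := by
    intro y hy
    have h1 : ¬ (‖η‖ ^ 2 / 4 ≤ ⟪y + η - m 1, η⟫) := hy
    rw [hexp (m 1) y] at h1
    push_neg at h1
    linarith
  have hAS1 : A ⊆ S1 := by
    intro x hx
    have hx' : ‖η‖ ^ 2 / 4 ≤ ⟪x - m 1, η⟫ := hx
    show ‖η‖ / 4 * ‖η‖ ≤ |⟪x - m 1, η⟫|
    rw [hrr]
    exact hx'.trans (le_abs_self _)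
  have hTS1 : T ⊆ S1 := by
    intro y hy
    have h1 := hmemT y hy
    show ‖η‖ / 4 * ‖η‖ ≤ |⟪y - m 1, η⟫|
    rw [hrr]
    have : ‖η‖ ^ 2 / 4 ≤ -⟪y - m 1, η⟫ := by linarith
    exact this.trans (neg_le_abs _)
  have hTS0 : T ⊆ S0 := by
    intro y hy
    have h1 := hmemT y hy
    have h2 : ⟪y - m 0, η⟫ = ⟪y - m 1, η⟫ + ⟪m 1 - m 0, η⟫ := by
      rw [show y - m 0 = (y - m 1) + (m 1 - m 0) by abel, inner_add_left]
    have h3 : ⟪m 1 - m 0, η⟫ ≤ ‖η‖ ^ 2 / 4 := by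
      rw [real_inner_comm]
      linarith
    show ‖η‖ / 4 * ‖η‖ ≤ |⟪y - m 0, η⟫|
    rw [hrr]
    have : ‖η‖ ^ 2 / 4 ≤ -⟪y - m 0, η⟫ := by
      rw [h2]
      linarith
    exact this.trans (neg_le_abs _)
  have hdisj : Disjoint A T := by
    rw [Set.disjoint_left]
    intro x hxA hxT
    have h1 : ‖η‖ ^ 2 / 4 ≤ ⟪x - m 1, η⟫ := hxA
    have h2 := hmemT x hxT
    linarith
  have htail1 : tailProb (ν 1) (m 1) η (‖η‖ / 4) = ∫ x in S1, ν 1 x := rfl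
  have htail0 : tailProb (ν 0) (m 0) η (‖η‖ / 4) = ∫ x in S0, ν 0 x := rfl
  have htail1nn : 0 ≤ tailProb (ν 1) (m 1) η (‖η‖ / 4) := by
    rw [htail1]
    exact setIntegral_nonneg hS1meas fun x _ => hνnn 1 x
  have htail0nn : 0 ≤ tailProb (ν 0) (m 0) η (‖η‖ / 4) := by
    rw [htail0]
    exact setIntegral_nonneg hS0meas fun x _ => hνnn 0 x
  have hMx0 : 0 ≤ Mx := le_trans htail0nn (le_max_left _ _)
  -- tail comparisons
  have hcomb : (∫ x in A, ν 1 x) + (∫ x in T, ν 1 x) ≤ tailProb (ν 1) (m 1) η (‖η‖ / 4) := by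
    rw [htail1, ← setIntegral_union hdisj hTmeas ((hνint 1).integrableOn) ((hνint 1).integrableOn)]
    exact setIntegral_mono_set ((hνint 1).integrableOn)
      (Filter.Eventually.of_forall (hνnn 1))
      (HasSubset.Subset.eventuallyLE (Set.union_subset hAS1 hTS1))
  have hT0le : (∫ x in T, ν 0 x) ≤ tailProb (ν 0) (m 0) η (‖η‖ / 4) := by
    rw [htail0]
    exact setIntegral_mono_set ((hνint 0).integrableOn)
      (Filter.Eventually.of_forall (hνnn 0))
      (HasSubset.Subset.eventuallyLE hTS0)
  -- translation
  have htrans : (∫ x in Aᶜ, muBd lam ν η x) =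
      lam * (∫ x in T, ν 1 x) + (1 - lam) * (∫ x in T, ν 0 x) := by
    have e1 : (∫ x in Aᶜ, muBd lam ν η x) =
        (∫ x in Aᶜ, lam * ν 1 (x - η)) + ∫ x in Aᶜ, (1 - lam) * ν 0 (x - η) := by
      simp only [muBd]
      exact integral_add (((hνint 1).comp_sub_right η).const_mul lam).integrableOn
        (((hνint 0).comp_sub_right η).const_mul (1 - lam)).integrableOn
    rw [e1, integral_const_mul, integral_const_mul,
      setIntegral_translate (ν 1) η hAmeas.compl, setIntegral_translate (ν 0) η hAmeas.compl,
      ← hTdef]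
  have hintA : (∫ x in A, lam * ν 1 x) = lam * ∫ x in A, ν 1 x := integral_const_mul _ _
  -- pointwise bounds on g·μcl
  have hfpoi_eq : ∀ x, fPoi lam ρ ν η x = (1 - ρ) * (lam * ν 1 x) /
      ((1 - ρ) * muCl lam ν x + ρ * muBd lam ν η x) := by
    intro x
    show (1 - ρ) * lam * ν 1 x / muPoi lam ρ ν η x = _
    rw [show muPoi lam ρ ν η x = (1 - ρ) * muCl lam ν x + ρ * muBd lam ν η x from rfl,
      mul_assoc]
  have hgabs : ∀ x, g x = |lam * ν 1 x / muCl lam ν x - (1 - ρ) * (lam * ν 1 x) /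
      ((1 - ρ) * muCl lam ν x + ρ * muBd lam ν η x)| := by
    intro x
    rw [hgx x, hfpoi_eq x]
    rfl
  have hminA : ∀ x, g x * muCl lam ν x ≤ (1 - ρ)⁻¹ * (lam * ν 1 x) := by
    intro x
    by_cases hx : muCl lam ν x = 0
    · rw [hx, mul_zero]
      exact mul_nonneg (inv_nonneg.mpr h1ρ.le) (mul_nonneg hlam0.le (hνnn 1 x))
    · have hxpos : 0 < muCl lam ν x := (hw0 x).lt_of_ne (Ne.symm hx)
      rw [hgabs x]
      exact (real_key hρ0.le h1ρ (mul_nonneg hlam0.le (hνnn 1 x)) (hwb0 x) hxpos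
        (hnum1 x)).1
  have hminB : ∀ x, g x * muCl lam ν x ≤ (1 - ρ)⁻¹ * muBd lam ν η x := by
    intro x
    by_cases hx : muCl lam ν x = 0
    · rw [hx, mul_zero]
      exact mul_nonneg (inv_nonneg.mpr h1ρ.le) (hwb0 x)
    · have hxpos : 0 < muCl lam ν x := (hw0 x).lt_of_ne (Ne.symm hx)
      rw [hgabs x]
      exact (real_key hρ0.le h1ρ (mul_nonneg hlam0.le (hνnn 1 x)) (hwb0 x) hxpos
        (hnum1 x)).2
  have hmin : ∀ x, g x * muCl lam ν x ≤ (1 - ρ)⁻¹ *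
      (A.indicator (fun z => lam * ν 1 z) x + Aᶜ.indicator (muBd lam ν η) x) := by
    intro x
    by_cases hxa : x ∈ A
    · rw [Set.indicator_of_mem hxa, Set.indicator_of_notMem (by simpa using hxa), add_zero]
      exact hminA x
    · rw [Set.indicator_of_notMem hxa, Set.indicator_of_mem (by simpa using hxa), zero_add]
      exact hminB x
  have hindint : Integrable fun x =>
      A.indicator (fun z => lam * ν 1 z) x + Aᶜ.indicator (muBd lam ν η) x :=
    (((hνint 1).const_mul lam).indicator hAmeas).add (hwbint.indicator hAmeas.compl)
  have step4 : (∫ x, g x * muCl lam ν x) ≤ (1 - ρ)⁻¹ * Mx := by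
    have h := integral_mono I5 (hindint.const_mul _) hmin
    rw [integral_const_mul, integral_add (((hνint 1).const_mul lam).indicator hAmeas)
      (hwbint.indicator hAmeas.compl), integral_indicator hAmeas,
      integral_indicator hAmeas.compl] at h
    refine h.trans ?_
    apply mul_le_mul_of_nonneg_left ?_ (inv_nonneg.mpr h1ρ.le)
    rw [hintA, htrans]
    have hc1 : (∫ x in A, ν 1 x) + (∫ x in T, ν 1 x) ≤ Mx := hcomb.trans (le_max_right _ _)
    have hc0 : (∫ x in T, ν 0 x) ≤ Mx := hT0le.trans (le_max_left _ _)
    have hA1nn : 0 ≤ ∫ x in A, ν 1 x := setIntegral_nonneg hAmeas fun x _ => hνnn 1 x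
    have hT1nn : 0 ≤ ∫ x in T, ν 1 x := setIntegral_nonneg hTmeas fun x _ => hνnn 1 x
    have hT0nn : 0 ≤ ∫ x in T, ν 0 x := setIntegral_nonneg hTmeas fun x _ => hνnn 0 x
    linarith [mul_le_mul_of_nonneg_left hc1 hlam0.le,
      mul_le_mul_of_nonneg_left hc0 (by linarith : (0:ℝ) ≤ 1 - lam)]
  -- Step 5 : rpow bound
  have hI5nn : 0 ≤ ∫ x, g x * muCl lam ν x :=
    integral_nonneg fun x => mul_nonneg (hg0 x) (hw0 x)
  have hrwpow : ((1 - ρ)⁻¹ * Mx) ^ α = (1 - ρ) ^ (-α) * Mx ^ α := by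
    rw [Real.mul_rpow (inv_nonneg.mpr h1ρ.le) hMx0, Real.inv_rpow h1ρ.le,
      ← Real.rpow_neg h1ρ.le]
  have step5 : (∫ x, g x * muCl lam ν x) ^ α ≤ (1 - ρ) ^ (-α) * Mx ^ α := by
    rw [← hrwpow]
    exact Real.rpow_le_rpow hI5nn step4 hα0.le
  -- assemble
  calc (∫ x, ℓ (f x) (fCl lam ν x) * muCl lam ν x)
      ≤ (∫ x, ℓ (f x) (fPoi lam ρ ν η x) * muCl lam ν x)
        + C * ∫ x, g x ^ α * muCl lam ν x := step1
    _ ≤ (1 - ρ)⁻¹ * (∫ x, ℓ (f x) (fPoi lam ρ ν η x) * muPoi lam ρ ν η x)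
        + C * ((∫ x, g x * muCl lam ν x) ^ α) :=
        add_le_add step2 (mul_le_mul_of_nonneg_left step3 hC.le)
    _ ≤ (1 - ρ)⁻¹ * (∫ x, ℓ (f x) (fPoi lam ρ ν η x) * muPoi lam ρ ν η x)
        + C * ((1 - ρ) ^ (-α) * Mx ^ α) :=
        add_le_add le_rfl (mul_le_mul_of_nonneg_left step5 hC.le)
    _ = (1 - ρ)⁻¹ * (∫ x, ℓ (f x) (fPoi lam ρ ν η x) * muPoi lam ρ ν η x)
        + C * (1 - ρ) ^ (-α) * Mx ^ α := by ring

end
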